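/- With probability at least 1 − 2d²/n², for each i ≤ d, |λ_i(P) − n·λ_i(E[XX^⊤])| ≤ 2d²√(n log n), where λ_i denotes the i-th largest eigenvalue; moreover λ_i(P) = 0 for i > d. -/

import Mathlib

open Matrix MeasureTheory ProbabilityTheory
open scoped RealInnerProductSpace ENNReal

/-- The eigenvalues of a real symmetric matrix listed in decreasing order
(`eigDesc M 0` is the largest); junk value `0` if `M` is not symmetric. -/
noncomputable def eigDesc {n : ℕ} (M : Matrix (Fin n) (Fin n) ℝ) : Fin n → ℝ :=
  if h : M.IsHermitian then fun i => (h.eigenvalues ∘ Tuple.sort h.eigenvalues) i.rev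
  else 0

namespace EigAux

variable {m : ℕ} {A : Matrix (Fin m) (Fin m) ℝ}

noncomputable def sortPerm (hA : A.IsHermitian) : Equiv.Perm (Fin m) :=
  Fin.revPerm.trans (Tuple.sort hA.eigenvalues)

lemma eigDesc_eq (hA : A.IsHermitian) (i : Fin m) :
    eigDesc A i = hA.eigenvalues (sortPerm hA i) := by
  rw [eigDesc, dif_pos hA]; rfl

lemma eigDesc_antitone (hA : A.IsHermitian) : Antitone (eigDesc A) := by
  intro i j hij
  rw [eigDesc_eq hA, eigDesc_eq hA]
  exact Tuple.monotone_sort hA.eigenvalues (Fin.rev_le_rev.mpr hij)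

/-- sorted orthonormal eigenbasis -/
noncomputable def sb (hA : A.IsHermitian) :
    OrthonormalBasis (Fin m) ℝ (EuclideanSpace ℝ (Fin m)) :=
  hA.eigenvectorBasis.reindex (sortPerm hA).symm

lemma apply_sb (hA : A.IsHermitian) (i : Fin m) :
    toEuclideanLin A (sb hA i) = eigDesc A i • sb hA i := by
  rw [toEuclideanLin_apply, sb, OrthonormalBasis.reindex_apply, Equiv.symm_symm,
    eigDesc_eq hA]
  have := hA.mulVec_eigenvectorBasis (sortPerm hA i)
  rw [this]
  simp

lemma repr_apply_sb (hA : A.IsHermitian) (x : EuclideanSpace ℝ (Fin m)) (i : Fin m) :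
    (sb hA).repr (toEuclideanLin A x) i = eigDesc A i * (sb hA).repr x i := by
  rw [OrthonormalBasis.repr_apply_apply, OrthonormalBasis.repr_apply_apply,
    ← (isHermitian_iff_isSymmetric.mp hA) (sb hA i) x, apply_sb hA i,
    real_inner_smul_left]

lemma inner_eq_sum (hA : A.IsHermitian) (x y : EuclideanSpace ℝ (Fin m)) :
    ⟪x, y⟫ = ∑ i, (sb hA).repr x i * (sb hA).repr y i := by
  rw [← (sb hA).repr.inner_map_map x y, PiLp.inner_apply]
  simp only [RCLike.inner_apply, starRingEnd_apply, star_trivial]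
  exact Finset.sum_congr rfl fun i _ => mul_comm _ _

lemma q_eq_sum (hA : A.IsHermitian) (x : EuclideanSpace ℝ (Fin m)) :
    ⟪x, toEuclideanLin A x⟫ = ∑ i, eigDesc A i * ((sb hA).repr x i) ^ 2 := by
  rw [inner_eq_sum hA]
  refine Finset.sum_congr rfl fun i _ => ?_
  rw [repr_apply_sb hA]; ring

lemma norm_sq_eq_sum (hA : A.IsHermitian) (x : EuclideanSpace ℝ (Fin m)) :
    ‖x‖ ^ 2 = ∑ i, ((sb hA).repr x i) ^ 2 := by
  rw [← real_inner_self_eq_norm_sq, inner_eq_sum hA]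
  refine Finset.sum_congr rfl fun i _ => ?_; ring

lemma repr_eq_zero_of_mem_span (hA : A.IsHermitian) {s : Set (Fin m)}
    {x : EuclideanSpace ℝ (Fin m)}
    (hx : x ∈ Submodule.span ℝ (Set.range fun k : s => sb hA k)) {j : Fin m}
    (hj : j ∉ s) : (sb hA).repr x j = 0 := by
  induction hx using Submodule.span_induction with
  | mem y hy =>
    obtain ⟨⟨k, hk⟩, rfl⟩ := hy
    rw [OrthonormalBasis.repr_apply_apply]
    exact (sb hA).orthonormal.2 (fun h => hj (h ▸ hk))
  | zero => simp
  | add y z _ _ hy hz => simp [map_add, hy, hz]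
  | smul c y _ hy => simp [_root_.map_smul, hy]

lemma finrank_span_sb (hA : A.IsHermitian) (s : Set (Fin m)) [Fintype s] :
    Module.finrank ℝ (Submodule.span ℝ (Set.range fun k : s => sb hA k)) =
      Fintype.card s := by
  exact finrank_span_eq_card ((sb hA).orthonormal.linearIndependent.comp
    (fun k : s => (k : Fin m)) Subtype.val_injective)

/-- lower bound on quadratic form on the span of the top eigenvectors -/
lemma q_ge_on_Iic (hA : A.IsHermitian) (i : Fin m) {x : EuclideanSpace ℝ (Fin m)}
    (hx : x ∈ Submodule.span ℝ (Set.range fun k : Set.Iic i => sb hA k)) :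
    eigDesc A i * ‖x‖ ^ 2 ≤ ⟪x, toEuclideanLin A x⟫ := by
  rw [q_eq_sum hA, norm_sq_eq_sum hA, Finset.mul_sum]
  refine Finset.sum_le_sum fun j _ => ?_
  by_cases hj : j ∈ Set.Iic i
  · exact mul_le_mul_of_nonneg_right (eigDesc_antitone hA hj) (sq_nonneg _)
  · rw [repr_eq_zero_of_mem_span hA hx hj]; simp

lemma q_le_on_Ici (hA : A.IsHermitian) (i : Fin m) {x : EuclideanSpace ℝ (Fin m)}
    (hx : x ∈ Submodule.span ℝ (Set.range fun k : Set.Ici i => sb hA k)) :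
    ⟪x, toEuclideanLin A x⟫ ≤ eigDesc A i * ‖x‖ ^ 2 := by
  rw [q_eq_sum hA, norm_sq_eq_sum hA, Finset.mul_sum]
  refine Finset.sum_le_sum fun j _ => ?_
  by_cases hj : j ∈ Set.Ici i
  · exact mul_le_mul_of_nonneg_right (eigDesc_antitone hA hj) (sq_nonneg _)
  · rw [repr_eq_zero_of_mem_span hA hx hj]; simp

/-- max characterization, `≥` direction -/
lemma le_eigDesc (hA : A.IsHermitian) (i : Fin m) (r : ℝ)
    (V : Submodule ℝ (EuclideanSpace ℝ (Fin m)))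
    (hdim : Module.finrank ℝ V = i + 1)
    (h : ∀ x ∈ V, r * ‖x‖ ^ 2 ≤ ⟪x, toEuclideanLin A x⟫) : r ≤ eigDesc A i := by
  -- intersect V with span of bottom eigenvectors (Ici i)
  have hWdim : Module.finrank ℝ (Submodule.span ℝ (Set.range fun k : Set.Ici i => sb hA k)) = m - i := by
    rw [finrank_span_sb hA (Set.Ici i)]; rw [Fintype.card_Ici, Fin.card_Ici]
  set W := Submodule.span ℝ (Set.range fun k : Set.Ici i => sb hA k) with hWdef
  have hne : V ⊓ W ≠ ⊥ := by
    intro hbot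
    have h1 := Submodule.finrank_sup_add_finrank_inf_eq V W
    rw [hbot, finrank_bot, add_zero, hdim, hWdim] at h1
    have h2 : Module.finrank ℝ ↥(V ⊔ W) ≤ m := by
      simpa [finrank_euclideanSpace_fin] using (V ⊔ W).finrank_le
    omega
  obtain ⟨x, hx, hx0⟩ := Submodule.exists_mem_ne_zero_of_ne_bot hne
  have hnorm : (0:ℝ) < ‖x‖ ^ 2 := pow_pos (norm_pos_iff.mpr hx0) 2
  have := (h x hx.1).trans (q_le_on_Ici hA i hx.2)
  exact le_of_mul_le_mul_right this hnorm

/-- min characterization, `≤` direction -/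
lemma eigDesc_le (hA : A.IsHermitian) (i : Fin m) (r : ℝ)
    (W : Submodule ℝ (EuclideanSpace ℝ (Fin m)))
    (hdim : m < Module.finrank ℝ W + (i + 1))
    (h : ∀ x ∈ W, ⟪x, toEuclideanLin A x⟫ ≤ r * ‖x‖ ^ 2) : eigDesc A i ≤ r := by
  have hVdim : Module.finrank ℝ (Submodule.span ℝ (Set.range fun k : Set.Iic i => sb hA k)) = i + 1 := by
    rw [finrank_span_sb hA (Set.Iic i)]; rw [Fintype.card_Iic, Fin.card_Iic]
  set V := Submodule.span ℝ (Set.range fun k : Set.Iic i => sb hA k) with hVdef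
  have hne : V ⊓ W ≠ ⊥ := by
    intro hbot
    have h1 := Submodule.finrank_sup_add_finrank_inf_eq V W
    rw [hbot, finrank_bot, add_zero, hVdim] at h1
    have h2 : Module.finrank ℝ ↥(V ⊔ W) ≤ m := by
      simpa [finrank_euclideanSpace_fin] using (V ⊔ W).finrank_le
    omega
  obtain ⟨x, hx, hx0⟩ := Submodule.exists_mem_ne_zero_of_ne_bot hne
  have hnorm : (0:ℝ) < ‖x‖ ^ 2 := pow_pos (norm_pos_iff.mpr hx0) 2
  have := (q_ge_on_Iic hA i hx.1).trans (h x hx.2)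
  exact le_of_mul_le_mul_right this hnorm

lemma eigDesc_le_add {B : Matrix (Fin m) (Fin m) ℝ} (hA : A.IsHermitian)
    (hB : B.IsHermitian) (C : ℝ)
    (hC : ∀ x : EuclideanSpace ℝ (Fin m), ⟪x, toEuclideanLin (A - B) x⟫ ≤ C * ‖x‖ ^ 2)
    (i : Fin m) : eigDesc A i ≤ eigDesc B i + C := by
  refine eigDesc_le hA i _ (Submodule.span ℝ (Set.range fun k : Set.Ici i => sb hB k)) ?_ ?_
  · rw [finrank_span_sb hB (Set.Ici i), Fintype.card_Ici, Fin.card_Ici]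
    omega
  · intro x hx
    have h1 : ⟪x, toEuclideanLin A x⟫ =
        ⟪x, toEuclideanLin B x⟫ + ⟪x, toEuclideanLin (A - B) x⟫ := by
      rw [map_sub, LinearMap.sub_apply, inner_sub_right]; ring
    have h2 := q_le_on_Ici hB i hx
    have h3 := hC x
    rw [h1]; nlinarith [sq_nonneg ‖x‖]

lemma weyl_abs {B : Matrix (Fin m) (Fin m) ℝ} (hA : A.IsHermitian)
    (hB : B.IsHermitian) (C : ℝ)
    (hC : ∀ x : EuclideanSpace ℝ (Fin m), |⟪x, toEuclideanLin (A - B) x⟫| ≤ C * ‖x‖ ^ 2)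
    (i : Fin m) : |eigDesc A i - eigDesc B i| ≤ C := by
  rw [abs_sub_le_iff]
  constructor
  · have := eigDesc_le_add hA hB C (fun x => (le_abs_self _).trans (hC x)) i
    linarith
  · have hC' : ∀ x : EuclideanSpace ℝ (Fin m),
        ⟪x, toEuclideanLin (B - A) x⟫ ≤ C * ‖x‖ ^ 2 := by
      intro x
      have h1 : ⟪x, toEuclideanLin (B - A) x⟫ = -⟪x, toEuclideanLin (A - B) x⟫ := by
        rw [map_sub, map_sub, LinearMap.sub_apply, LinearMap.sub_apply,
          inner_sub_right, inner_sub_right]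
        ring
      rw [h1]
      exact (neg_le_abs _).trans (hC x)
    have := eigDesc_le_add hB hA C hC' i
    linarith

lemma eigDesc_nonneg (hA : A.IsHermitian)
    (h : ∀ x : EuclideanSpace ℝ (Fin m), 0 ≤ ⟪x, toEuclideanLin A x⟫) (i : Fin m) :
    0 ≤ eigDesc A i := by
  refine le_eigDesc hA i 0 (Submodule.span ℝ (Set.range fun k : Set.Iic i => sb hA k)) ?_ ?_
  · rw [finrank_span_sb hA (Set.Iic i)]; rw [Fintype.card_Iic, Fin.card_Iic]
  · intro x _; simpa using h x

lemma eigDesc_smul (hA : A.IsHermitian) {c : ℝ} (hc : 0 ≤ c) (i : Fin m) :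
    eigDesc (c • A) i = c * eigDesc A i := by
  have hcA : (c • A).IsHermitian := by
    show (c • A)ᴴ = c • A
    rw [conjTranspose_smul, star_trivial, hA.eq]
  have hq : ∀ x : EuclideanSpace ℝ (Fin m),
      ⟪x, toEuclideanLin (c • A) x⟫ = c * ⟪x, toEuclideanLin A x⟫ := by
    intro x
    rw [_root_.map_smul, LinearMap.smul_apply, inner_smul_right]
  refine le_antisymm ?_ ?_
  · refine eigDesc_le hcA i _ (Submodule.span ℝ (Set.range fun k : Set.Ici i => sb hA k)) ?_ ?_
    · rw [finrank_span_sb hA (Set.Ici i), Fintype.card_Ici, Fin.card_Ici]; omega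
    · intro x hx
      rw [hq, mul_assoc]
      exact mul_le_mul_of_nonneg_left (q_le_on_Ici hA i hx) hc
  · refine le_eigDesc hcA i _ (Submodule.span ℝ (Set.range fun k : Set.Iic i => sb hA k)) ?_ ?_
    · rw [finrank_span_sb hA (Set.Iic i)]; rw [Fintype.card_Iic, Fin.card_Iic]
    · intro x hx
      rw [hq, mul_assoc]
      exact mul_le_mul_of_nonneg_left (q_ge_on_Iic hA i hx) hc

end EigAux

namespace EigAux

variable {n d : ℕ}

lemma toEuclideanLin_mul {a b c : Type*} [Fintype a] [Fintype b] [Fintype c]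
    [DecidableEq a] [DecidableEq b] [DecidableEq c]
    (M : Matrix a b ℝ) (N : Matrix b c ℝ) (x : EuclideanSpace ℝ c) :
    toEuclideanLin (M * N) x = toEuclideanLin M (toEuclideanLin N x) := by
  simp [toEuclideanLin_apply, mulVec_mulVec]

lemma q_gram (B : Matrix (Fin n) (Fin d) ℝ) (x : EuclideanSpace ℝ (Fin n)) :
    ⟪x, toEuclideanLin (B * Bᵀ) x⟫ = ‖toEuclideanLin Bᵀ x‖ ^ 2 := by
  have hadj : toEuclideanLin Bᵀ = LinearMap.adjoint (toEuclideanLin B) := by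
    rw [← conjTranspose_eq_transpose_of_trivial, toEuclideanLin_conjTranspose_eq_adjoint]
  rw [toEuclideanLin_mul, ← real_inner_self_eq_norm_sq]
  rw [hadj, LinearMap.adjoint_inner_left]

lemma isHermitian_gram (B : Matrix (Fin n) (Fin d) ℝ) : (B * Bᵀ).IsHermitian := by
  have := isHermitian_mul_conjTranspose_self B
  rwa [conjTranspose_eq_transpose_of_trivial] at this

lemma gram_ge (B : Matrix (Fin n) (Fin d) ℝ) (i : ℕ) (hin : i < n) (hid : i < d) :
    eigDesc (Bᵀ * B) ⟨i, hid⟩ ≤ eigDesc (B * Bᵀ) ⟨i, hin⟩ := by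
  have hP : (B * Bᵀ).IsHermitian := isHermitian_gram B
  have hQ : (Bᵀ * B).IsHermitian := by
    simpa [transpose_transpose] using isHermitian_gram Bᵀ
  have hqQ : ∀ x : EuclideanSpace ℝ (Fin d),
      ⟪x, toEuclideanLin (Bᵀ * B) x⟫ = ‖toEuclideanLin B x‖ ^ 2 := by
    intro x
    have := q_gram Bᵀ x
    rwa [transpose_transpose] at this
  have hPnn : 0 ≤ eigDesc (B * Bᵀ) ⟨i, hin⟩ :=
    eigDesc_nonneg hP (fun x => by rw [q_gram]; positivity) _
  set lam := eigDesc (Bᵀ * B) ⟨i, hid⟩ with hlam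
  rcases le_or_gt lam 0 with hl | hl
  · exact hl.trans hPnn
  set p := Submodule.span ℝ (Set.range fun k : Set.Iic (⟨i, hid⟩ : Fin d) => sb hQ k)
    with hpdef
  have hpdim : Module.finrank ℝ ↥p = i + 1 := by
    rw [hpdef, finrank_span_sb hQ (Set.Iic _)]; rw [Fintype.card_Iic, Fin.card_Iic]
  set f := toEuclideanLin B with hfdef
  -- key quadratic bound on p
  have hinj : Function.Injective (f.domRestrict p) := by
    rw [injective_iff_map_eq_zero]
    rintro ⟨x, hx⟩ hfx
    have h0 : f x = 0 := hfx
    have h1 := q_ge_on_Iic hQ ⟨i, hid⟩ hx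
    rw [hqQ, h0] at h1
    simp only [norm_zero] at h1
    have hx0 : ‖x‖ ^ 2 ≤ 0 := by nlinarith
    have : x = 0 := by
      have := sq_nonneg ‖x‖
      have hn0 : ‖x‖ = 0 := by nlinarith
      exact norm_eq_zero.mp hn0
    exact Subtype.ext this
  refine le_eigDesc hP ⟨i, hin⟩ lam (p.map f) ?_ ?_
  · rw [← LinearMap.range_domRestrict]
    rw [LinearMap.finrank_range_of_inj hinj, hpdim]
  · rintro u hu
    obtain ⟨x, hx, rfl⟩ := Submodule.mem_map.mp hu
    have e1 : ⟪(f x : EuclideanSpace ℝ (Fin n)), toEuclideanLin (B * Bᵀ) (f x)⟫ =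
        ‖toEuclideanLin (Bᵀ * B) x‖ ^ 2 := by
      rw [q_gram, toEuclideanLin_mul Bᵀ B x]
    rw [e1]
    have e2 : ‖toEuclideanLin (Bᵀ * B) x‖ ^ 2 =
        ∑ j, (eigDesc (Bᵀ * B) j) ^ 2 * ((sb hQ).repr x j) ^ 2 := by
      rw [norm_sq_eq_sum hQ]
      refine Finset.sum_congr rfl fun j _ => ?_
      rw [repr_apply_sb hQ]; ring
    have e3 : ‖f x‖ ^ 2 = ∑ j, eigDesc (Bᵀ * B) j * ((sb hQ).repr x j) ^ 2 := by
      rw [← hqQ, q_eq_sum hQ]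
    rw [e2, e3, Finset.mul_sum]
    refine Finset.sum_le_sum fun j _ => ?_
    by_cases hj : j ∈ Set.Iic (⟨i, hid⟩ : Fin d)
    · have hLj : lam ≤ eigDesc (Bᵀ * B) j := eigDesc_antitone hQ hj
      have hj0 : (0:ℝ) ≤ eigDesc (Bᵀ * B) j := le_trans hl.le hLj
      calc lam * (eigDesc (Bᵀ * B) j * (sb hQ).repr x j ^ 2)
          ≤ eigDesc (Bᵀ * B) j * (eigDesc (Bᵀ * B) j * (sb hQ).repr x j ^ 2) :=
            mul_le_mul_of_nonneg_right hLj (mul_nonneg hj0 (sq_nonneg _))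
        _ = eigDesc (Bᵀ * B) j ^ 2 * (sb hQ).repr x j ^ 2 := by ring
    · rw [repr_eq_zero_of_mem_span hQ hx hj]; simp

lemma gram_eq (B : Matrix (Fin n) (Fin d) ℝ) (i : ℕ) (hin : i < n) (hid : i < d) :
    eigDesc (B * Bᵀ) ⟨i, hin⟩ = eigDesc (Bᵀ * B) ⟨i, hid⟩ := by
  refine le_antisymm ?_ (gram_ge B i hin hid)
  have := gram_ge Bᵀ i hid hin
  rwa [transpose_transpose] at this

lemma gram_zero (B : Matrix (Fin n) (Fin d) ℝ) (i : Fin n) (hi : d ≤ (i : ℕ)) :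
    eigDesc (B * Bᵀ) i = 0 := by
  have hP : (B * Bᵀ).IsHermitian := isHermitian_gram B
  refine le_antisymm ?_ (eigDesc_nonneg hP (fun x => by rw [q_gram]; positivity) i)
  refine eigDesc_le hP i 0 (LinearMap.ker (toEuclideanLin Bᵀ)) ?_ ?_
  · have h1 := LinearMap.finrank_range_add_finrank_ker (toEuclideanLin (𝕜 := ℝ) Bᵀ)
    have h2 : Module.finrank ℝ ↥(LinearMap.range (toEuclideanLin (𝕜 := ℝ) Bᵀ)) ≤ d := by
      have := Submodule.finrank_le (LinearMap.range (toEuclideanLin (𝕜 := ℝ) Bᵀ))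
      simpa [finrank_euclideanSpace_fin] using this
    rw [finrank_euclideanSpace_fin] at h1
    have := i.isLt
    omega
  · intro x hx
    rw [q_gram, LinearMap.mem_ker.mp hx]
    simp

end EigAux

namespace EigAux
open scoped BigOperators

lemma norm_sq_coords {d : ℕ} (x : EuclideanSpace ℝ (Fin d)) :
    ‖x‖ ^ 2 = ∑ a, x a ^ 2 := by
  rw [← real_inner_self_eq_norm_sq, PiLp.inner_apply]
  simp only [RCLike.inner_apply, starRingEnd_apply, star_trivial]
  exact Finset.sum_congr rfl fun a _ => (sq (x a)).symm

lemma inner_toEuclideanLin_le {d : ℕ} (E : Matrix (Fin d) (Fin d) ℝ) (ε : ℝ)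
    (hε : 0 ≤ ε) (hE : ∀ a b, |E a b| ≤ ε) (x : EuclideanSpace ℝ (Fin d)) :
    |⟪x, toEuclideanLin E x⟫| ≤ ε * d * ‖x‖ ^ 2 := by
  have hcoord : ∀ a, toEuclideanLin E x a = ∑ b, E a b * x b := by
    intro a
    rw [toEuclideanLin_apply]
    rfl
  have hinner : ⟪x, toEuclideanLin E x⟫ = ∑ a, ∑ b, x a * (E a b * x b) := by
    rw [PiLp.inner_apply]
    simp only [RCLike.inner_apply, starRingEnd_apply, star_trivial]
    refine Finset.sum_congr rfl fun a _ => ?_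
    rw [hcoord, mul_comm, Finset.mul_sum]
  rw [hinner]
  calc |∑ a, ∑ b, x a * (E a b * x b)|
      ≤ ∑ a, |∑ b, x a * (E a b * x b)| := Finset.abs_sum_le_sum_abs _ _
    _ ≤ ∑ a, ∑ b, |x a * (E a b * x b)| :=
        Finset.sum_le_sum fun a _ => Finset.abs_sum_le_sum_abs _ _
    _ ≤ ∑ a, ∑ b, |x a| * (ε * |x b|) := by
        refine Finset.sum_le_sum fun a _ => Finset.sum_le_sum fun b _ => ?_
        rw [abs_mul, abs_mul]
        exact mul_le_mul_of_nonneg_left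
          (mul_le_mul_of_nonneg_right (hE a b) (abs_nonneg _)) (abs_nonneg _)
    _ = ε * ((∑ a, |x a|) * (∑ b, |x b|)) := by
        rw [Finset.sum_comm]
        simp_rw [← Finset.sum_mul, ← Finset.mul_sum]
        ring
    _ ≤ ε * (d * ‖x‖ ^ 2) := by
        refine mul_le_mul_of_nonneg_left ?_ hε
        have h1 : (∑ a, |x a|) * (∑ b, |x b|) = (∑ a, |x a|) ^ 2 := by ring
        rw [h1]
        have h2 := sq_sum_le_card_mul_sum_sq (s := Finset.univ)
          (f := fun a : Fin d => |x a|)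
        have h3 : ∑ a, |x a| ^ 2 = ‖x‖ ^ 2 := by
          rw [norm_sq_coords]
          exact Finset.sum_congr rfl fun a _ => sq_abs _
        rw [h3] at h2
        simpa using h2
    _ = ε * d * ‖x‖ ^ 2 := by ring

lemma det_main {n d : ℕ} (hn : 0 < n) (Y : Fin n → EuclideanSpace ℝ (Fin d))
    (M : Matrix (Fin d) (Fin d) ℝ) (hM : M.IsHermitian)
    (hclose : ∀ a b : Fin d,
      |(∑ l, Y l a * Y l b) - n * M a b| ≤ 2 * d * Real.sqrt (n * Real.log n)) :
    (∀ i : Fin n, ∀ h : (i : ℕ) < d,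
       |eigDesc (Matrix.of fun a b : Fin n => ⟪Y a, Y b⟫) i - (n : ℝ) * eigDesc M ⟨i, h⟩|
         ≤ 2 * d ^ 2 * Real.sqrt (n * Real.log n)) ∧
    (∀ i : Fin n, d ≤ (i : ℕ) → eigDesc (Matrix.of fun a b : Fin n => ⟪Y a, Y b⟫) i = 0) := by
  set s := Real.sqrt (n * Real.log n) with hs
  have hs0 : 0 ≤ s := Real.sqrt_nonneg _
  set B : Matrix (Fin n) (Fin d) ℝ := Matrix.of fun l a => Y l a with hB
  have hPB : (Matrix.of fun a b : Fin n => ⟪Y a, Y b⟫) = B * Bᵀ := by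
    ext a b
    simp only [Matrix.of_apply, Matrix.mul_apply, Matrix.transpose_apply, hB,
      PiLp.inner_apply, RCLike.inner_apply, starRingEnd_apply, star_trivial]
    exact Finset.sum_congr rfl fun i _ => mul_comm _ _
  have hQ : (Bᵀ * B).IsHermitian := by
    simpa [transpose_transpose] using isHermitian_gram Bᵀ
  have hQentry : ∀ a b, (Bᵀ * B) a b = ∑ l, Y l a * Y l b := by
    intro a b
    simp only [Matrix.mul_apply, Matrix.transpose_apply, hB, Matrix.of_apply]
  constructor
  · intro i h
    have hN : ((n : ℝ) • M).IsHermitian := by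
      show ((n:ℝ) • M)ᴴ = (n:ℝ) • M
      rw [conjTranspose_smul, star_trivial, hM.eq]
    have hweyl : |eigDesc (Bᵀ * B) ⟨i, h⟩ - eigDesc ((n : ℝ) • M) ⟨i, h⟩| ≤ 2 * d * s * d := by
      refine weyl_abs hQ hN _ ?_ ⟨i, h⟩
      intro x
      refine inner_toEuclideanLin_le _ (2 * d * s) (by positivity) ?_ x
      intro a b
      have : (Bᵀ * B - (n : ℝ) • M) a b = (∑ l, Y l a * Y l b) - n * M a b := by
        simp [hQentry, Matrix.sub_apply, Matrix.smul_apply, smul_eq_mul]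
      rw [this]
      exact hclose a b
    have hsmul : eigDesc ((n : ℝ) • M) ⟨i, h⟩ = (n : ℝ) * eigDesc M ⟨i, h⟩ :=
      eigDesc_smul hM (by positivity) _
    rw [hPB, gram_eq B i i.isLt h]
    rw [hsmul] at hweyl
    calc |eigDesc (Bᵀ * B) ⟨i, h⟩ - (n : ℝ) * eigDesc M ⟨i, h⟩| ≤ 2 * d * s * d := hweyl
      _ = 2 * d ^ 2 * s := by ring
  · intro i hi
    rw [hPB]
    exact gram_zero B i hi

end EigAux

section Prob
open MeasureTheory ProbabilityTheory

variable {Ω : Type*} [MeasurableSpace Ω] {μ : MeasureTheory.Measure Ω}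

lemma mgf_le_of_bounded [IsProbabilityMeasure μ] {Z : Ω → ℝ}
    (hmeas : Measurable Z) (hint : Integrable Z μ) (hmean : ∫ ω, Z ω ∂μ = 0)
    {R : ℝ} (hR : 0 < R) (hbdd : ∀ᵐ ω ∂μ, |Z ω| ≤ R) (t : ℝ) :
    mgf Z μ t ≤ Real.exp (t ^ 2 * R ^ 2 / 2) := by
  set a := t * R with ha
  have hchord : ∀ᵐ ω ∂μ, Real.exp (t * Z ω) ≤
      Real.cosh a + Z ω * (Real.sinh a / R) := by
    filter_upwards [hbdd] with ω hω
    obtain ⟨hω1, hω2⟩ := abs_le.mp hω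
    have h1 : 0 ≤ (R - Z ω) / (2 * R) := div_nonneg (by linarith) (by linarith)
    have h2 : 0 ≤ (R + Z ω) / (2 * R) := div_nonneg (by linarith) (by linarith)
    have h3 : (R - Z ω) / (2 * R) + (R + Z ω) / (2 * R) = 1 := by
      field_simp
      ring
    have hcx := convexOn_exp.2 (Set.mem_univ (-a)) (Set.mem_univ a) h1 h2 h3
    simp only [smul_eq_mul] at hcx
    have harg : (R - Z ω) / (2 * R) * (-a) + (R + Z ω) / (2 * R) * a = t * Z ω := by
      field_simp; ring
    rw [harg] at hcx
    refine hcx.trans (le_of_eq ?_)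
    rw [Real.cosh_eq, Real.sinh_eq]
    field_simp
    ring
  have hint2 : Integrable (fun ω => Real.cosh a + Z ω * (Real.sinh a / R)) μ :=
    (integrable_const _).add (hint.mul_const _)
  have hint1 : Integrable (fun ω => Real.exp (t * Z ω)) μ := by
    refine Integrable.mono' (integrable_const (Real.exp (|t| * R)))
      ((hmeas.const_mul t).exp.aestronglyMeasurable) ?_
    filter_upwards [hbdd] with ω hω
    rw [Real.norm_eq_abs, Real.abs_exp]
    apply Real.exp_le_exp.mpr
    calc t * Z ω ≤ |t * Z ω| := le_abs_self _
      _ = |t| * |Z ω| := abs_mul _ _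
      _ ≤ |t| * R := mul_le_mul_of_nonneg_left hω (abs_nonneg t)
  have hI : mgf Z μ t ≤ ∫ ω, (Real.cosh a + Z ω * (Real.sinh a / R)) ∂μ :=
    integral_mono_ae hint1 hint2 hchord
  have hIeq : ∫ ω, (Real.cosh a + Z ω * (Real.sinh a / R)) ∂μ = Real.cosh a := by
    rw [integral_add (integrable_const _) (hint.mul_const _), integral_const,
      integral_mul_const, hmean]
    simp
  rw [hIeq] at hI
  refine hI.trans ((Real.cosh_le_exp_half_sq a).trans (le_of_eq ?_))
  rw [ha]
  ring_nf

lemma tail_bound [IsProbabilityMeasure μ] {n : ℕ} (hn : 0 < n) {Z : Fin n → Ω → ℝ}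
    (hmeas : ∀ l, Measurable (Z l))
    (hindep : iIndepFun Z μ)
    (hint : ∀ l, Integrable (Z l) μ)
    (hmean : ∀ l, ∫ ω, Z l ω ∂μ = 0)
    {R : ℝ} (hR : 0 < R) (hbdd : ∀ l, ∀ᵐ ω ∂μ, |Z l ω| ≤ R)
    (s : ℝ) (hs : 0 < s) :
    (μ {ω | s ≤ ∑ l, Z l ω}).toReal ≤ Real.exp (-s ^ 2 / (2 * n * R ^ 2)) := by
  set t := s / (n * R ^ 2) with ht
  have hn' : (0:ℝ) < n := by exact_mod_cast hn
  have ht0 : 0 ≤ t := by positivity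
  have hint_exp : ∀ l, Integrable (fun ω => Real.exp (t * Z l ω)) μ := by
    intro l
    refine Integrable.mono' (integrable_const (Real.exp (|t| * R)))
      (((hmeas l).const_mul t).exp.aestronglyMeasurable) ?_
    filter_upwards [hbdd l] with ω hω
    rw [Real.norm_eq_abs, Real.abs_exp]
    apply Real.exp_le_exp.mpr
    calc t * Z l ω ≤ |t * Z l ω| := le_abs_self _
      _ = |t| * |Z l ω| := abs_mul _ _
      _ ≤ |t| * R := mul_le_mul_of_nonneg_left hω (abs_nonneg t)
  have hint_sum : Integrable (fun ω => Real.exp (t * (∑ l, Z l) ω)) μ := by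
    have hmsum : Measurable fun ω => t * (∑ l, Z l) ω := by
      rw [show (fun ω => t * (∑ l, Z l) ω) = fun ω => t * ∑ l, Z l ω by
        funext ω; simp [Finset.sum_apply]]
      exact (Finset.measurable_sum Finset.univ fun l _ => hmeas l).const_mul t
    refine Integrable.mono' (integrable_const (Real.exp (|t| * (n * R))))
      (hmsum.exp.aestronglyMeasurable) ?_
    have hall : ∀ᵐ ω ∂μ, ∀ l, |Z l ω| ≤ R := (ae_all_iff).mpr hbdd
    filter_upwards [hall] with ω hω
    rw [Real.norm_eq_abs, Real.abs_exp]
    apply Real.exp_le_exp.mpr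
    have hsum_bdd : |(∑ l, Z l) ω| ≤ n * R := by
      rw [Finset.sum_apply]
      refine (Finset.abs_sum_le_sum_abs _ _).trans ?_
      calc ∑ l, |Z l ω| ≤ ∑ _l : Fin n, R := Finset.sum_le_sum fun l _ => hω l
        _ = n * R := by rw [Finset.sum_const, Finset.card_univ, Fintype.card_fin,
            nsmul_eq_mul]
    calc t * (∑ l, Z l) ω ≤ |t * (∑ l, Z l) ω| := le_abs_self _
      _ = |t| * |(∑ l, Z l) ω| := abs_mul _ _
      _ ≤ |t| * (n * R) := mul_le_mul_of_nonneg_left hsum_bdd (abs_nonneg t)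
  have hchern := measure_ge_le_exp_mul_mgf (X := ∑ l, Z l) (μ := μ) s ht0 hint_sum
  rw [hindep.mgf_sum hmeas Finset.univ] at hchern
  have hmgf : ∏ l, mgf (Z l) μ t ≤ Real.exp (n * (t ^ 2 * R ^ 2 / 2)) := by
    calc ∏ l, mgf (Z l) μ t ≤ ∏ _l : Fin n, Real.exp (t ^ 2 * R ^ 2 / 2) :=
          Finset.prod_le_prod (fun l _ => mgf_nonneg)
            (fun l _ => mgf_le_of_bounded (hmeas l) (hint l) (hmean l) hR (hbdd l) t)
      _ = Real.exp (n * (t ^ 2 * R ^ 2 / 2)) := by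
          rw [Finset.prod_const, Finset.card_univ, Fintype.card_fin, ← Real.exp_nat_mul]
  have hset : {ω | s ≤ ∑ l, Z l ω} = {ω | s ≤ (∑ l, Z l) ω} := by
    ext ω; simp [Finset.sum_apply]
  rw [hset]
  refine hchern.trans ?_
  calc Real.exp (-t * s) * ∏ l, mgf (Z l) μ t
      ≤ Real.exp (-t * s) * Real.exp (n * (t ^ 2 * R ^ 2 / 2)) := by
        exact mul_le_mul_of_nonneg_left hmgf (Real.exp_nonneg _)
    _ = Real.exp (-t * s + n * (t ^ 2 * R ^ 2 / 2)) := (Real.exp_add _ _).symm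
    _ = Real.exp (-s ^ 2 / (2 * n * R ^ 2)) := by
        congr 1
        rw [ht]
        field_simp
        ring

end Prob

section Entry
open MeasureTheory ProbabilityTheory

lemma coord_abs_le_norm {d : ℕ} (v : EuclideanSpace ℝ (Fin d)) (c : Fin d) :
    |v c| ≤ ‖v‖ := by
  have h : v c ^ 2 ≤ ‖v‖ ^ 2 := by
    rw [EigAux.norm_sq_coords]
    exact Finset.single_le_sum (f := fun i => v i ^ 2) (fun i _ => sq_nonneg _)
      (Finset.mem_univ c)
  calc |v c| = Real.sqrt (v c ^ 2) := (Real.sqrt_sq_eq_abs _).symm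
    _ ≤ Real.sqrt (‖v‖ ^ 2) := Real.sqrt_le_sqrt h
    _ = ‖v‖ := Real.sqrt_sq (norm_nonneg _)

lemma entry_bad_bound {Ω : Type*} [MeasurableSpace Ω] (μ : MeasureTheory.Measure Ω)
    [IsProbabilityMeasure μ] {n d : ℕ} (hn : 0 < n) (hn2 : 1 < n)
    (X : Fin n → Ω → EuclideanSpace ℝ (Fin d))
    (hmeas : ∀ l, Measurable (X l))
    (hindep : iIndepFun X μ)
    (hident : ∀ l, IdentDistrib (X l) (X ⟨0, hn⟩) μ μ)
    (hball : ∀ l, ∀ᵐ ω ∂μ, ‖X l ω‖ ≤ 1)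
    (M : Matrix (Fin d) (Fin d) ℝ)
    (hM : ∀ a b, M a b = ∫ ω, X ⟨0, hn⟩ ω a * X ⟨0, hn⟩ ω b ∂μ)
    (a b : Fin d) :
    μ ({ω | 2*d*Real.sqrt (n*Real.log n) ≤ ∑ l, (X l ω a * X l ω b - M a b)}
      ∪ {ω | 2*d*Real.sqrt (n*Real.log n) ≤ -∑ l, (X l ω a * X l ω b - M a b)})
      ≤ ENNReal.ofReal (2 / n ^ 2) := by
  have hd : 0 < d := a.pos
  have hd' : (0:ℝ) < d := by exact_mod_cast hd
  have hn' : (0:ℝ) < n := by exact_mod_cast hn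
  have hn2' : (1:ℝ) < n := by exact_mod_cast hn2
  have hlog : 0 < Real.log n := Real.log_pos hn2'
  set s := 2*(d:ℝ)*Real.sqrt (n*Real.log n) with hsdef
  have hs : 0 < s := by
    apply mul_pos (by positivity)
    exact Real.sqrt_pos.mpr (by positivity)
  -- the coordinate product function
  set g : EuclideanSpace ℝ (Fin d) → ℝ := fun v => v a * v b with hgdef
  have hgmeas : Measurable g := by fun_prop
  have hgbdd : ∀ v : EuclideanSpace ℝ (Fin d), ‖v‖ ≤ 1 → |g v| ≤ 1 := by
    intro v hv
    rw [hgdef, abs_mul]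
    exact mul_le_one₀ ((coord_abs_le_norm v a).trans hv) (abs_nonneg _)
      ((coord_abs_le_norm v b).trans hv)
  have hgint : ∀ l, Integrable (fun ω => g (X l ω)) μ := by
    intro l
    refine Integrable.mono' (integrable_const 1)
      (hgmeas.comp (hmeas l)).aestronglyMeasurable ?_
    filter_upwards [hball l] with ω hω
    rw [Real.norm_eq_abs]
    exact hgbdd _ hω
  have hgmean : ∀ l, ∫ ω, g (X l ω) ∂μ = M a b := by
    intro l
    rw [hM a b]
    exact ((hident l).comp hgmeas).integral_eq
  have hM1 : |M a b| ≤ 1 := by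
    rw [hM a b, ← Real.norm_eq_abs]
    have := norm_integral_le_of_norm_le_const (μ := μ)
      (f := fun ω => X ⟨0, hn⟩ ω a * X ⟨0, hn⟩ ω b) (C := 1) ?_
    · simpa using this
    · filter_upwards [hball ⟨0, hn⟩] with ω hω
      rw [Real.norm_eq_abs]
      exact hgbdd _ hω
  -- boundedness of the centered variable by d
  have hZbdd : ∀ l, ∀ᵐ ω ∂μ, |g (X l ω) - M a b| ≤ (d:ℝ) := by
    intro l
    filter_upwards [hball l] with ω hω
    rcases eq_or_lt_of_le (show 1 ≤ d from hd) with hd1 | hd2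
    · -- d = 1 : a = b, everything is in [0,1]
      have hab : a = b := by
        have : Subsingleton (Fin d) := by rw [← hd1]; infer_instance
        exact Subsingleton.elim a b
      have hg0 : ∀ v : EuclideanSpace ℝ (Fin d), 0 ≤ g v := by
        intro v; rw [hgdef]; subst hab; exact mul_self_nonneg _
      have hMnn : 0 ≤ M a b := by
        rw [hM a b]
        apply integral_nonneg
        intro ω'
        subst hab
        exact mul_self_nonneg _
      have hg1 : g (X l ω) ≤ 1 := (le_abs_self _).trans (hgbdd _ hω)
      have hM1' : M a b ≤ 1 := (le_abs_self _).trans hM1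
      rw [abs_le]
      constructor
      · have := hg0 (X l ω); rw [← hd1]; push_cast; linarith
      · rw [← hd1]; push_cast; linarith
    · -- d ≥ 2
      have hd2' : (2:ℝ) ≤ d := by exact_mod_cast hd2
      calc |g (X l ω) - M a b| ≤ |g (X l ω)| + |M a b| := abs_sub _ _
        _ ≤ 1 + 1 := add_le_add (hgbdd _ hω) hM1
        _ ≤ (d:ℝ) := by linarith
  -- centered variables
  set Z : Fin n → Ω → ℝ := fun l ω => g (X l ω) - M a b with hZdef
  have hZmeas : ∀ l, Measurable (Z l) := fun l =>
    (hgmeas.comp (hmeas l)).sub measurable_const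
  have hZint : ∀ l, Integrable (Z l) μ := fun l =>
    (hgint l).sub (integrable_const _)
  have hZmean : ∀ l, ∫ ω, Z l ω ∂μ = 0 := by
    intro l
    rw [hZdef]
    simp only
    rw [integral_sub (hgint l) (integrable_const _), hgmean l, integral_const]
    simp
  have hZindep : iIndepFun Z μ :=
    hindep.comp (fun _ => fun v => g v - M a b)
      (fun _ => hgmeas.sub measurable_const)
  have hNindep : iIndepFun (fun l ω => -(Z l ω)) μ :=
    hindep.comp (fun _ => fun v => -(g v - M a b))
      (fun _ => (hgmeas.sub measurable_const).neg)
  -- the exponent computation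
  have hexp : Real.exp (-s^2 / (2 * n * (d:ℝ)^2)) = 1 / n^2 := by
    have hsq : s^2 = 4 * (d:ℝ)^2 * (n * Real.log n) := by
      rw [hsdef, mul_pow, mul_pow, Real.sq_sqrt (by positivity)]
      ring
    have harg : -s^2 / (2 * n * (d:ℝ)^2) = -(2 * Real.log n) := by
      rw [hsq]; field_simp; ring
    rw [harg, show (2:ℝ) * Real.log n = Real.log ((n:ℝ)^2) by
      rw [Real.log_pow]; push_cast; ring]
    rw [Real.exp_neg, Real.exp_log (by positivity)]
    exact (one_div _).symm
  -- the two tails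
  have htail1 : μ {ω | s ≤ ∑ l, Z l ω} ≤ ENNReal.ofReal (1 / n^2) := by
    rw [ENNReal.le_ofReal_iff_toReal_le (measure_ne_top _ _) (by positivity)]
    have := tail_bound hn hZmeas hZindep hZint hZmean hd' hZbdd s hs
    rwa [hexp] at this
  have htail2 : μ {ω | s ≤ -∑ l, Z l ω} ≤ ENNReal.ofReal (1 / n^2) := by
    rw [ENNReal.le_ofReal_iff_toReal_le (measure_ne_top _ _) (by positivity)]
    have hNbdd : ∀ l, ∀ᵐ ω ∂μ, |-(Z l ω)| ≤ (d:ℝ) := by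
      intro l
      filter_upwards [hZbdd l] with ω hω
      rwa [abs_neg]
    have hNmean : ∀ l, ∫ ω, -(Z l ω) ∂μ = 0 := by
      intro l
      rw [integral_neg, hZmean l, neg_zero]
    have := tail_bound hn (fun l => (hZmeas l).neg) hNindep
      (fun l => (hZint l).neg) hNmean hd' hNbdd s hs
    rw [hexp] at this
    have hseteq : {ω | s ≤ ∑ l, -(Z l ω)} = {ω | s ≤ -∑ l, Z l ω} := by
      ext ω; simp
    simp only [Pi.neg_apply] at this
    rwa [hseteq] at this
  calc μ _ ≤ μ {ω | s ≤ ∑ l, Z l ω} + μ {ω | s ≤ -∑ l, Z l ω} := measure_union_le _ _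
    _ ≤ ENNReal.ofReal (1 / n^2) + ENNReal.ofReal (1 / n^2) :=
        add_le_add htail1 htail2
    _ = ENNReal.ofReal (2 / n^2) := by
        rw [← ENNReal.ofReal_add (by positivity) (by positivity)]
        congr 1; ring

end Entry

open MeasureTheory ProbabilityTheory
open scoped ENNReal


/-- with probability at least `1 − 2d²/n²`, for each `i ≤ d`,
`|λ_i(P) − n λ_i(E[XXᵀ])| ≤ 2d²√(n log n)`, and `λ_i(P) = 0` for `i > d`,
where `P = XXᵀ` is the Gram matrix of `n` i.i.d. latent vectors in the unit ball. -/
theorem eigenvalues_of_P_concentrate {Ω : Type*} [MeasurableSpace Ω]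
    (μ : Measure Ω) [IsProbabilityMeasure μ] {n d : ℕ} (hd : d ≤ n) (hn : 0 < n)
    (X : Fin n → Ω → EuclideanSpace ℝ (Fin d))
    (hmeas : ∀ l, Measurable (X l))
    (hindep : iIndepFun X μ)
    (hident : ∀ l, IdentDistrib (X l) (X ⟨0, hn⟩) μ μ)
    (hball : ∀ l, ∀ᵐ ω ∂μ, ‖X l ω‖ ≤ 1)
    (M : Matrix (Fin d) (Fin d) ℝ)
    (hM : ∀ a b, M a b = ∫ ω, X ⟨0, hn⟩ ω a * X ⟨0, hn⟩ ω b ∂μ)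
    (hrank : M.rank = d) :
    (1 : ℝ≥0∞) - ENNReal.ofReal (2 * d ^ 2 / n ^ 2) ≤
      μ {ω |
        (∀ i : Fin n, ∀ h : (i : ℕ) < d,
          |eigDesc (Matrix.of fun a b : Fin n => ⟪X a ω, X b ω⟫) i -
              (n : ℝ) * eigDesc M ⟨i, h⟩| ≤ 2 * d ^ 2 * Real.sqrt (n * Real.log n)) ∧
        (∀ i : Fin n, d ≤ (i : ℕ) →
          eigDesc (Matrix.of fun a b : Fin n => ⟪X a ω, X b ω⟫) i = 0)} := by
  classical
  by_cases htriv : (1:ℝ≥0∞) ≤ ENNReal.ofReal (2 * d ^ 2 / n ^ 2)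
  · rw [tsub_eq_zero_of_le htriv]
    exact zero_le
  push_neg at htriv
  have hn' : (0:ℝ) < n := by exact_mod_cast hn
  have hfrac : 2 * (d:ℝ) ^ 2 / n ^ 2 < 1 := by
    have := ENNReal.ofReal_lt_one.mp htriv
    exact_mod_cast this
  have hd2 : 2 * (d:ℝ)^2 < (n:ℝ)^2 := by
    rw [div_lt_one (by positivity)] at hfrac
    exact hfrac
  -- symmetry of M
  have hMsym : M.IsHermitian := by
    show Mᴴ = M
    ext a b
    rw [Matrix.conjTranspose_apply, star_trivial, hM b a, hM a b]
    congr 1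
    funext ω
    ring
  set s := 2*(d:ℝ)*Real.sqrt ((n:ℝ)*Real.log n) with hsdef
  set S := {ω : Ω |
        (∀ i : Fin n, ∀ h : (i : ℕ) < d,
          |eigDesc (Matrix.of fun a b : Fin n => ⟪X a ω, X b ω⟫) i -
              (n : ℝ) * eigDesc M ⟨i, h⟩| ≤ 2 * d ^ 2 * Real.sqrt (n * Real.log n)) ∧
        (∀ i : Fin n, d ≤ (i : ℕ) →
          eigDesc (Matrix.of fun a b : Fin n => ⟪X a ω, X b ω⟫) i = 0)} with hSdef
  set Bad : Fin d × Fin d → Set Ω := fun p =>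
    {ω | s ≤ ∑ l, (X l ω p.1 * X l ω p.2 - M p.1 p.2)}
      ∪ {ω | s ≤ -∑ l, (X l ω p.1 * X l ω p.2 - M p.1 p.2)} with hBaddef
  -- the complement of S is contained in the union of bad events
  have hsub : Sᶜ ⊆ ⋃ p, Bad p := by
    intro ω hω
    by_contra hnot
    apply hω
    simp only [Set.mem_iUnion, not_exists] at hnot
    have hclose : ∀ a b : Fin d,
        |(∑ l, X l ω a * X l ω b) - (n:ℝ) * M a b| ≤ 2 * d * Real.sqrt (n * Real.log n) := by
      intro a b
      have h1 := hnot (a, b)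
      rw [hBaddef] at h1
      simp only [Set.mem_union, Set.mem_setOf_eq, not_or, not_le] at h1
      have hTeq : ∑ l, (X l ω a * X l ω b - M a b)
          = (∑ l, X l ω a * X l ω b) - (n:ℝ) * M a b := by
        rw [Finset.sum_sub_distrib, Finset.sum_const, Finset.card_univ,
          Fintype.card_fin, nsmul_eq_mul]
      rw [hTeq] at h1
      rw [abs_le]
      constructor <;> [skip; skip] <;> [linarith [h1.2]; linarith [h1.1]]
    exact (EigAux.det_main hn (fun l => X l ω) M hMsym hclose : _)
  -- measure of the union
  have hUnion : μ (⋃ p, Bad p) ≤ ENNReal.ofReal (2 * d ^ 2 / n ^ 2) := by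
    rcases Nat.eq_zero_or_pos d with hd0 | hdpos
    · have hempty : IsEmpty (Fin d × Fin d) := by
        subst hd0
        infer_instance
      have : (⋃ p : Fin d × Fin d, Bad p) = ∅ := Set.iUnion_of_empty _
      rw [this]
      simp
    · have hn2 : 1 < n := by
        by_contra h
        push_neg at h
        have hn1 : n = 1 := le_antisymm h hn
        have hcast : ((n:ℕ):ℝ) = 1 := by rw [hn1]; norm_num
        have hd1 : (1:ℝ) ≤ (d:ℝ) := by exact_mod_cast hdpos
        rw [hcast] at hd2
        nlinarith
      have hkey : ∀ p : Fin d × Fin d, μ (Bad p) ≤ ENNReal.ofReal (2 / n ^ 2) := by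
        intro p
        exact entry_bad_bound μ hn hn2 X hmeas hindep hident hball M hM p.1 p.2
      calc μ (⋃ p, Bad p) ≤ ∑' p : Fin d × Fin d, μ (Bad p) := measure_iUnion_le _
        _ ≤ ∑' _p : Fin d × Fin d, ENNReal.ofReal (2 / n ^ 2) :=
            ENNReal.tsum_le_tsum hkey
        _ = ((d * d : ℕ) : ℝ≥0∞) * ENNReal.ofReal (2 / n ^ 2) := by
            rw [tsum_fintype, Finset.sum_const, Finset.card_univ]
            simp [Fintype.card_prod, nsmul_eq_mul]
        _ = ENNReal.ofReal (2 * d ^ 2 / n ^ 2) := by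
            rw [← ENNReal.ofReal_natCast, ← ENNReal.ofReal_mul (by positivity)]
            congr 1
            push_cast
            ring
  rw [tsub_le_iff_right]
  calc (1:ℝ≥0∞) = μ Set.univ := (measure_univ (μ := μ)).symm
    _ = μ (S ∪ Sᶜ) := by rw [Set.union_compl_self]
    _ ≤ μ S + μ Sᶜ := measure_union_le _ _
    _ ≤ μ S + ENNReal.ofReal (2 * d ^ 2 / n ^ 2) :=
        add_le_add_right ((measure_mono hsub).trans hUnion) _
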